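/- For the 3-dimensional para-Sasaki-like Riemannian Π-manifold (R³, φ, ξ, η, g) defined by the metric matrix [[cosh 2x³, sinh 2x³, 0],[sinh 2x³, cosh 2x³, 0],[0,0,1]], the Ricci tensor equals ρ = −2 η⊗η and the scalar curvature of g equals −2. -/

import Mathlib

open Matrix Real

/-- The metric matrix on `ℝ³` at `x`:
`[[cosh 2x³, sinh 2x³, 0],[sinh 2x³, cosh 2x³, 0],[0,0,1]]`. -/
noncomputable def exMetric (x : Fin 3 → ℝ) : Matrix (Fin 3) (Fin 3) ℝ :=
  !![Real.cosh (2 * x 2), Real.sinh (2 * x 2), 0;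
     Real.sinh (2 * x 2), Real.cosh (2 * x 2), 0;
     0, 0, 1]

/-- The partial derivative `∂_i h` of a function on `ℝ³`. -/
noncomputable def pd (i : Fin 3) (h : (Fin 3 → ℝ) → ℝ) (x : Fin 3 → ℝ) : ℝ :=
  fderiv ℝ h x (Pi.single i 1)

/-- The Christoffel symbols `Γ^k_{ij} = ½ g^{kl}(∂_i g_{lj} + ∂_j g_{li} − ∂_l g_{ij})`
of the Levi-Civita connection of `exMetric`. -/
noncomputable def Gamma (k i j : Fin 3) (x : Fin 3 → ℝ) : ℝ :=
  (1 / 2) * ∑ l : Fin 3, (exMetric x)⁻¹ k l *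
    (pd i (fun y => exMetric y l j) x + pd j (fun y => exMetric y l i) x
      - pd l (fun y => exMetric y i j) x)

/-- The curvature tensor
`R^l_{ijk} = ∂_i Γ^l_{jk} − ∂_j Γ^l_{ik} + Γ^l_{im}Γ^m_{jk} − Γ^l_{jm}Γ^m_{ik}`. -/
noncomputable def Riem (l i j k : Fin 3) (x : Fin 3 → ℝ) : ℝ :=
  pd i (Gamma l j k) x - pd j (Gamma l i k) x
    + ∑ m : Fin 3, (Gamma l i m x * Gamma m j k x - Gamma l j m x * Gamma m i k x)

/-- The Ricci tensor `ρ_{jk} = R^i_{ijk}`. -/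
noncomputable def Ric (j k : Fin 3) (x : Fin 3 → ℝ) : ℝ :=
  ∑ i : Fin 3, Riem i i j k x

/-- The scalar curvature `τ = g^{jk} ρ_{jk}`. -/
noncomputable def scalCurv (x : Fin 3 → ℝ) : ℝ :=
  ∑ j : Fin 3, ∑ k : Fin 3, (exMetric x)⁻¹ j k * Ric j k x


lemma hasFDerivAt_smul_coord (c : ℝ) (x : Fin 3 → ℝ) :
    HasFDerivAt (fun y : Fin 3 → ℝ => c * y 2)
      (c • (ContinuousLinearMap.proj 2 : (Fin 3 → ℝ) →L[ℝ] ℝ)) x :=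
  ((ContinuousLinearMap.proj (R := ℝ) (φ := fun _ : Fin 3 => ℝ) 2).hasFDerivAt).const_mul c

lemma pd_cosh2 (i : Fin 3) (x : Fin 3 → ℝ) :
    pd i (fun y => Real.cosh (2 * y 2)) x = if i = 2 then 2 * Real.sinh (2 * x 2) else 0 := by
  have h : HasFDerivAt (fun y : Fin 3 → ℝ => Real.cosh (2 * y 2))
      (Real.sinh (2 * x 2) • (2:ℝ) • (ContinuousLinearMap.proj 2 : (Fin 3 → ℝ) →L[ℝ] ℝ)) x :=
    by have := (Real.hasDerivAt_cosh (2 * x 2)).comp_hasFDerivAt x (hasFDerivAt_smul_coord 2 x); exact this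
  rw [pd, h.fderiv]
  simp [Pi.single_apply, eq_comm]
  split <;> ring

lemma pd_sinh2 (i : Fin 3) (x : Fin 3 → ℝ) :
    pd i (fun y => Real.sinh (2 * y 2)) x = if i = 2 then 2 * Real.cosh (2 * x 2) else 0 := by
  have h : HasFDerivAt (fun y : Fin 3 → ℝ => Real.sinh (2 * y 2))
      (Real.cosh (2 * x 2) • (2:ℝ) • (ContinuousLinearMap.proj 2 : (Fin 3 → ℝ) →L[ℝ] ℝ)) x :=
    by have := (Real.hasDerivAt_sinh (2 * x 2)).comp_hasFDerivAt x (hasFDerivAt_smul_coord 2 x); exact this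
  rw [pd, h.fderiv]
  simp [Pi.single_apply, eq_comm]
  split <;> ring

lemma pd_neg_cosh2 (i : Fin 3) (x : Fin 3 → ℝ) :
    pd i (fun y => -Real.cosh (2 * y 2)) x = if i = 2 then -(2 * Real.sinh (2 * x 2)) else 0 := by
  have h : HasFDerivAt (fun y : Fin 3 → ℝ => -Real.cosh (2 * y 2))
      (-(Real.sinh (2 * x 2) • (2:ℝ) • (ContinuousLinearMap.proj 2 : (Fin 3 → ℝ) →L[ℝ] ℝ))) x :=
    by have := ((Real.hasDerivAt_cosh (2 * x 2)).comp_hasFDerivAt x (hasFDerivAt_smul_coord 2 x)).neg; exact this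
  rw [pd, h.fderiv]
  simp [Pi.single_apply, eq_comm]
  split <;> ring

lemma pd_neg_sinh2 (i : Fin 3) (x : Fin 3 → ℝ) :
    pd i (fun y => -Real.sinh (2 * y 2)) x = if i = 2 then -(2 * Real.cosh (2 * x 2)) else 0 := by
  have h : HasFDerivAt (fun y : Fin 3 → ℝ => -Real.sinh (2 * y 2))
      (-(Real.cosh (2 * x 2) • (2:ℝ) • (ContinuousLinearMap.proj 2 : (Fin 3 → ℝ) →L[ℝ] ℝ))) x :=
    by have := ((Real.hasDerivAt_sinh (2 * x 2)).comp_hasFDerivAt x (hasFDerivAt_smul_coord 2 x)).neg; exact this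
  rw [pd, h.fderiv]
  simp [Pi.single_apply, eq_comm]
  split <;> ring

lemma pd_const (i : Fin 3) (c : ℝ) (x : Fin 3 → ℝ) : pd i (fun _ => c) x = 0 := by
  rw [pd, fderiv_fun_const]
  simp

lemma exMetric_inv (x : Fin 3 → ℝ) :
    (exMetric x)⁻¹ = !![Real.cosh (2 * x 2), -Real.sinh (2 * x 2), 0;
      -Real.sinh (2 * x 2), Real.cosh (2 * x 2), 0; 0, 0, 1] := by
  apply Matrix.inv_eq_right_inv
  ext i j
  fin_cases i <;> fin_cases j <;>
    simp [exMetric, Matrix.mul_apply, Fin.sum_univ_three, Matrix.one_apply] <;>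
    nlinarith [Real.cosh_sq_sub_sinh_sq (2 * x 2)]

noncomputable def Gval (k i j : Fin 3) : (Fin 3 → ℝ) → ℝ := fun x =>
  if k = 2 then
    if i = 2 ∨ j = 2 then 0
    else if i = j then -Real.sinh (2 * x 2) else -Real.cosh (2 * x 2)
  else if (i = 2 ∧ (j : ℕ) + (k : ℕ) = 1) ∨ (j = 2 ∧ (i : ℕ) + (k : ℕ) = 1) then 1 else 0

lemma Gamma_eq (k i j : Fin 3) : Gamma k i j = Gval k i j := by
  funext x
  fin_cases k <;> fin_cases i <;> fin_cases j <;>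
    (rw [_root_.Gamma, Fin.sum_univ_three, exMetric_inv]
     simp [exMetric, Gval, pd_cosh2, pd_sinh2, pd_const]
     try ring
     try linarith [Real.cosh_sq_sub_sinh_sq (x 2 * 2)])

lemma pd_Gval (i l j k : Fin 3) (x : Fin 3 → ℝ) :
    pd i (Gval l j k) x =
      if i = 2 then
        (if l = 2 ∧ j ≠ 2 ∧ k ≠ 2 then
          (if j = k then -(2 * Real.cosh (2 * x 2)) else -(2 * Real.sinh (2 * x 2)))
        else 0)
      else 0 := by
  fin_cases l <;> fin_cases j <;> fin_cases k <;>
    first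
    | (show pd i (fun y => -Real.sinh (2 * y 2)) _ = _
       simp [pd_neg_sinh2])
    | (show pd i (fun y => -Real.cosh (2 * y 2)) _ = _
       simp [pd_neg_cosh2])
    | (show pd i (fun _ => (1:ℝ)) _ = _
       simp [pd_const])
    | (show pd i (fun _ => (0:ℝ)) _ = _
       simp [pd_const])

lemma Ric_eq (j k : Fin 3) (x : Fin 3 → ℝ) :
    Ric j k x = if j = 2 ∧ k = 2 then -2 else 0 := by
  fin_cases j <;> fin_cases k <;>
    (simp only [Ric, Riem, Gamma_eq, Fin.sum_univ_three, pd_Gval]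
     simp [Gval]
     try ring
     try linarith [Real.cosh_sq_sub_sinh_sq (2 * x 2)])


/-- For the 3-dimensional para-Sasaki-like Riemannian Π-manifold
`(ℝ³, φ, ξ, η, g)` defined by the metric above (with `η = dx³`), the Ricci tensor
equals `ρ = −2 η⊗η`, i.e. `ρ_{jk} = −2 (dx³)_j (dx³)_k`, and the scalar curvature of
`g` equals `−2`. -/
theorem exMetric_ricci_scalar :
    (∀ (x : Fin 3 → ℝ) (j k : Fin 3),
      Ric j k x = -2 * (if j = 2 then (1 : ℝ) else 0) * (if k = 2 then 1 else 0)) ∧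
    (∀ x : Fin 3 → ℝ, scalCurv x = -2) := by
  have h1 : ∀ (x : Fin 3 → ℝ) (j k : Fin 3),
      Ric j k x = -2 * (if j = 2 then (1 : ℝ) else 0) * (if k = 2 then 1 else 0) := by
    intro x j k
    rw [Ric_eq]
    by_cases hj : j = 2 <;> by_cases hk : k = 2 <;> simp [hj, hk]
  refine ⟨h1, fun x => ?_⟩
  rw [scalCurv, Fin.sum_univ_three]
  simp only [Fin.sum_univ_three, h1, exMetric_inv]
  norm_num
  simp
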